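/- Let K₁ > 1, 0 < ε < K₁ - 1, k ∈ ℕ, and 0 < Δt small enough that (k - (K₁-ε))Δt + 1 ≥ (kΔt+1)/2 and 1/Δt > K₁ - ε. Then Γ(k + 1/Δt - (K₁-ε))·Γ(1/Δt) / [Γ(k + 1/Δt)·Γ(1/Δt - (K₁-ε))] ≤ ((k-(K₁-ε))Δt + 1)^{-(K₁-ε)}. -/

import Mathlib

open Real

/-- Lower Gautschi-type bound: for `z > 0`, `a ≥ 1`, `z ^ a * Γ z ≤ Γ (z + a)`. -/
lemma gamma_lower_aux (z a : ℝ) (hz : 0 < z) (ha : 1 ≤ a) :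
    z ^ a * Real.Gamma z ≤ Real.Gamma (z + a) := by
  have ha0 : 0 < a := lt_of_lt_of_le one_pos ha
  have hz1 : (0:ℝ) < z + 1 := by linarith
  have hza : (0:ℝ) < z + a := by linarith
  have key := Real.convexOn_log_Gamma.secant_mono (a := z) (x := z + 1) (y := z + a)
    (Set.mem_Ioi.2 hz) (Set.mem_Ioi.2 hz1) (Set.mem_Ioi.2 hza)
    (by linarith) (by linarith) (by linarith)
  have hG1 : (Real.log ∘ Real.Gamma) (z + 1) = Real.log z + Real.log (Real.Gamma z) := by
    simp only [Function.comp_apply, Real.Gamma_add_one hz.ne']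
    rw [Real.log_mul hz.ne' (Real.Gamma_pos_of_pos hz).ne']
  have key2 : Real.log z ≤ ((Real.log ∘ Real.Gamma) (z + a) - Real.log (Real.Gamma z)) / a := by
    have : ((Real.log ∘ Real.Gamma) (z + 1) - (Real.log ∘ Real.Gamma) z) / (z + 1 - z) =
        Real.log z := by
      simp only [hG1, Function.comp_apply]; ring
    rw [this] at key
    convert key using 2
    · rfl
    all_goals simp [Function.comp] <;> ring
  have key3 : a * Real.log z + Real.log (Real.Gamma z) ≤ Real.log (Real.Gamma (z + a)) := by
    have := (le_div_iff₀ ha0).mp key2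
    simp only [Function.comp_apply] at this
    linarith [mul_comm a (Real.log z)]
  calc z ^ a * Real.Gamma z
      = Real.exp (a * Real.log z + Real.log (Real.Gamma z)) := by
        rw [Real.exp_add, Real.rpow_def_of_pos hz, Real.exp_log (Real.Gamma_pos_of_pos hz), mul_comm (Real.log z) a]
    _ ≤ Real.exp (Real.log (Real.Gamma (z + a))) := Real.exp_le_exp.2 key3
    _ = Real.Gamma (z + a) := Real.exp_log (Real.Gamma_pos_of_pos hza)

/-- Upper Gautschi-type bound: for `z > 0`, `a ≥ 0`, `Γ (z + a) ≤ (z + a) ^ a * Γ z`. -/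
lemma gamma_upper_aux (z a : ℝ) (hz : 0 < z) (ha : 0 ≤ a) :
    Real.Gamma (z + a) ≤ (z + a) ^ a * Real.Gamma z := by
  rcases eq_or_lt_of_le ha with rfl | ha0
  · simp
  have hza : (0:ℝ) < z + a := by linarith
  have hza1 : (0:ℝ) < z + a + 1 := by linarith
  have key := Real.convexOn_log_Gamma.secant_mono (a := z + a) (x := z) (y := z + a + 1)
    (Set.mem_Ioi.2 hza) (Set.mem_Ioi.2 hz) (Set.mem_Ioi.2 hza1)
    (by linarith) (by linarith) (by linarith)
  have hG1 : (Real.log ∘ Real.Gamma) (z + a + 1) =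
      Real.log (z + a) + Real.log (Real.Gamma (z + a)) := by
    simp only [Function.comp_apply, Real.Gamma_add_one hza.ne']
    rw [Real.log_mul hza.ne' (Real.Gamma_pos_of_pos hza).ne']
  have hL : ((Real.log ∘ Real.Gamma) z - (Real.log ∘ Real.Gamma) (z + a)) / (z - (z + a)) =
      (Real.log (Real.Gamma (z + a)) - Real.log (Real.Gamma z)) / a := by
    simp only [Function.comp_apply]
    rw [show z - (z + a) = -a by ring, div_neg, ← neg_div, neg_sub]
  have hR : ((Real.log ∘ Real.Gamma) (z + a + 1) - (Real.log ∘ Real.Gamma) (z + a)) /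
      (z + a + 1 - (z + a)) = Real.log (z + a) := by
    simp only [hG1, Function.comp_apply]; ring
  rw [hL, hR] at key
  have key3 : Real.log (Real.Gamma (z + a)) ≤ a * Real.log (z + a) +
      Real.log (Real.Gamma z) := by
    have := (div_le_iff₀ ha0).mp key
    linarith [mul_comm (Real.log (z + a)) a]
  calc Real.Gamma (z + a)
      = Real.exp (Real.log (Real.Gamma (z + a))) := (Real.exp_log (Real.Gamma_pos_of_pos hza)).symm
    _ ≤ Real.exp (a * Real.log (z + a) + Real.log (Real.Gamma z)) := Real.exp_le_exp.2 key3
    _ = (z + a) ^ a * Real.Gamma z := by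
        rw [Real.exp_add, Real.rpow_def_of_pos hza, Real.exp_log (Real.Gamma_pos_of_pos hz), mul_comm (Real.log (z+a)) a]

theorem gamma_ratio_bound (K₁ ε Δt : ℝ) (k : ℕ) (hK₁ : 1 < K₁)
    (hε0 : 0 < ε) (hε1 : ε < K₁ - 1) (hΔt : 0 < Δt)
    (h1 : ((k : ℝ) - (K₁ - ε)) * Δt + 1 ≥ ((k : ℝ) * Δt + 1) / 2)
    (h2 : 1 / Δt > K₁ - ε) :
    Real.Gamma ((k : ℝ) + 1/Δt - (K₁ - ε)) * Real.Gamma (1/Δt) /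
        (Real.Gamma ((k : ℝ) + 1/Δt) * Real.Gamma (1/Δt - (K₁ - ε))) ≤
      (((k : ℝ) - (K₁ - ε)) * Δt + 1) ^ (-(K₁ - ε)) := by
  set a : ℝ := K₁ - ε with ha_def
  have ha1 : 1 < a := by simp only [ha_def]; linarith
  have ha0 : 0 < a := by linarith
  set y : ℝ := 1/Δt - a with hy_def
  have hy : 0 < y := by simp only [hy_def]; linarith
  have hky : 0 < (k : ℝ) + y := by positivity
  have hx : 1/Δt = y + a := by simp [hy_def]
  have hkpos : (0:ℝ) < (k:ℝ) + 1/Δt - a := by rw [hx]; linarith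
  -- rewrite the RHS base
  have hbase : ((k : ℝ) - a) * Δt + 1 = ((k:ℝ) + y) * Δt := by
    have : Δt * (1/Δt) = 1 := by field_simp
    rw [hy_def]; nlinarith [this]
  have hbasepos : 0 < ((k : ℝ) - a) * Δt + 1 := by rw [hbase]; positivity
  -- bounds
  have hB : Real.Gamma (y + a) ≤ (y + a) ^ a * Real.Gamma y :=
    gamma_upper_aux y a hy ha0.le
  have hA : ((k:ℝ) + y) ^ a * Real.Gamma ((k:ℝ) + y) ≤ Real.Gamma ((k:ℝ) + y + a) :=
    gamma_lower_aux ((k:ℝ) + y) a hky ha1.le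
  have hGy : 0 < Real.Gamma y := Real.Gamma_pos_of_pos hy
  have hGky : 0 < Real.Gamma ((k:ℝ) + y) := Real.Gamma_pos_of_pos hky
  have hGkya : 0 < Real.Gamma ((k:ℝ) + y + a) := Real.Gamma_pos_of_pos (by linarith)
  have hpowky : (0:ℝ) < ((k:ℝ) + y) ^ a := Real.rpow_pos_of_pos hky a
  have hpowya : (0:ℝ) < (y + a) ^ a := Real.rpow_pos_of_pos (by linarith) a
  -- rewrite LHS arguments
  have e1 : (k : ℝ) + 1/Δt - a = (k:ℝ) + y := by rw [hx]; ring
  have e2 : (1:ℝ)/Δt - a = y := by rw [hx]; ring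
  rw [e1, hx, show (k:ℝ) + (y + a) = (k:ℝ) + y + a from by ring, hbase]
  -- RHS = ((y+a)/(k+y))^a
  have hRHS : (((k:ℝ) + y) * Δt) ^ (-a) = (y + a) ^ a / ((k:ℝ) + y) ^ a := by
    have hΔ : Δt = 1 / (y + a) := by
      rw [← hx]; field_simp
    rw [hΔ, Real.rpow_neg (by positivity), Real.mul_rpow hky.le (by positivity),
      one_div, Real.inv_rpow (by linarith : (0:ℝ) ≤ y + a)]
    field_simp
  rw [hRHS]
  rw [div_le_div_iff₀ (by positivity) (by positivity)]
  calc Real.Gamma ((k:ℝ) + y) * Real.Gamma (y + a) * ((k:ℝ) + y) ^ a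
      ≤ Real.Gamma ((k:ℝ) + y) * ((y + a) ^ a * Real.Gamma y) * ((k:ℝ) + y) ^ a := by
        have := mul_le_mul_of_nonneg_left hB hGky.le
        exact mul_le_mul_of_nonneg_right this hpowky.le
    _ = (y + a) ^ a * (((k:ℝ) + y) ^ a * Real.Gamma ((k:ℝ) + y) * Real.Gamma y) := by ring
    _ ≤ (y + a) ^ a * (Real.Gamma ((k:ℝ) + y + a) * Real.Gamma y) := by
        have := mul_le_mul_of_nonneg_right hA hGy.le
        exact mul_le_mul_of_nonneg_left (by linarith) hpowya.le
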